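/- Let B = {0,1}^ℕ with the one-sided shift R, and define F : B × {0,1} → B × {0,1} by F(x,y) = (R(x), x₀). Then there exists a function φ : B → {0,1} whose graph is a global attractor: for every (x,y) ∈ B × {0,1} there is N such that for all n ≥ N, π₂(Fⁿ(x,y)) = φ(Rⁿ(x)). -/
import Mathlib

attribute [local instance] Classical.propDecidable

/-- The one-sided shift on `{0,1}^ℕ`. -/
def shiftNat (x : ℕ → Bool) : ℕ → Bool := fun n => x (n + 1)

/-- The skew product `F(x,y) = (R(x), x₀)` over the one-sided shift. -/
def Fcoin (p : (ℕ → Bool) × Bool) : (ℕ → Bool) × Bool := (shiftNat p.1, p.1 0)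

lemma shift_apply (x : ℕ → Bool) (n k : ℕ) : (shiftNat^[n] x) k = x (n + k) := by
  induction n generalizing x k with
  | zero => simp
  | succ n ih =>
      rw [Function.iterate_succ_apply, ih]
      simp only [shiftNat]
      congr 1
      omega

lemma shift_comm (a b : ℕ) (x : ℕ → Bool) :
    shiftNat^[a] (shiftNat^[b] x) = shiftNat^[a + b] x := by
  rw [← Function.iterate_add_apply]

instance coinSetoid : Setoid (ℕ → Bool) where
  r x y := ∃ n m, shiftNat^[n] x = shiftNat^[m] y
  iseqv := by
    refine ⟨fun x => ⟨0, 0, rfl⟩, ?_, ?_⟩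
    · rintro x y ⟨n, m, h⟩; exact ⟨m, n, h.symm⟩
    · rintro x y z ⟨n, m, h⟩ ⟨a, b, h2⟩
      refine ⟨a + n, m + b, ?_⟩
      rw [← shift_comm, h, shift_comm, Nat.add_comm a m, ← shift_comm, h2, shift_comm]

/-- eventually periodic -/
def EvPer (x : ℕ → Bool) : Prop := ∃ p, 0 < p ∧ ∃ M, shiftNat^[M + p] x = shiftNat^[M] x

noncomputable def phiCoin (z : ℕ → Bool) : Bool :=
  if h : ∃ p, 0 < p ∧ shiftNat^[p] z = z then
    z (Nat.find h - 1)
  else if h2 : ∃ k, shiftNat^[k + 1] ((Quotient.mk coinSetoid z).out) = z then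
    ((Quotient.mk coinSetoid z).out) (Nat.find h2)
  else false

lemma Fcoin_iter (x : ℕ → Bool) (y : Bool) (n : ℕ) :
    Fcoin^[n + 1] (x, y) = (shiftNat^[n + 1] x, x n) := by
  induction n with
  | zero => rfl
  | succ n ih =>
      rw [Function.iterate_succ_apply', ih]
      simp only [Fcoin, Prod.mk.injEq]
      constructor
      · funext k
        simp only [shiftNat, shift_apply]
        congr 1; omega
      · rw [shift_apply]

lemma periodic_eval {z : ℕ → Bool} {d : ℕ} (h : shiftNat^[d] z = z) (i : ℕ) :
    z (i + d) = z i := by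
  conv_rhs => rw [← h]
  rw [shift_apply, Nat.add_comm]

lemma pointwise_of_eq {u v : ℕ → Bool} {a b : ℕ} (h : shiftNat^[a] u = shiftNat^[b] v) :
    ∀ k, u (a + k) = v (b + k) := by
  intro k
  have := congrFun h k
  rwa [shift_apply, shift_apply] at this

lemma evper_of_rel {r x : ℕ → Bool} {a b : ℕ} (hab : shiftNat^[a] r = shiftNat^[b] x)
    (h : EvPer r) : EvPer x := by
  obtain ⟨p, hp, M, hM⟩ := h
  have hab' := pointwise_of_eq hab
  have hM' := pointwise_of_eq hM
  refine ⟨p, hp, M + b, ?_⟩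
  funext k
  rw [shift_apply, shift_apply]
  calc x (M + b + p + k) = x (b + (M + p + k)) := by congr 1; omega
    _ = r (a + (M + p + k)) := (hab' _).symm
    _ = r (M + p + (a + k)) := by congr 1; omega
    _ = r (M + (a + k)) := hM' (a + k)
    _ = r (a + (M + k)) := by congr 1; omega
    _ = x (b + (M + k)) := hab' (M + k)
    _ = x (M + b + k) := by congr 1; omega

theorem exists_global_attractor_coin :
    ∃ φ : (ℕ → Bool) → Bool,
      ∀ (x : ℕ → Bool) (y : Bool), ∃ N : ℕ, ∀ n ≥ N,
        (Fcoin^[n] (x, y)).2 = φ (shiftNat^[n] x) := by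
  refine ⟨phiCoin, fun x y => ?_⟩
  by_cases hev : EvPer x
  · obtain ⟨p, hp, M, hM⟩ := hev
    have hM' : ∀ i ≥ M, x (i + p) = x i := by
      intro i hi
      have := pointwise_of_eq hM (i - M)
      have e1 : M + p + (i - M) = i + p := by omega
      have e2 : M + (i - M) = i := by omega
      rwa [e1, e2] at this
    refine ⟨M + 1, fun n hn => ?_⟩
    obtain ⟨m, rfl⟩ : ∃ m, n = m + 1 := ⟨n - 1, by omega⟩
    rw [Fcoin_iter]
    set z := shiftNat^[m + 1] x with hz
    have hzp : shiftNat^[p] z = z := by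
      funext k
      rw [hz, shift_comm, shift_apply, shift_apply]
      have := hM' (m + 1 + k) (by omega)
      calc x (p + (m + 1) + k) = x (m + 1 + k + p) := by congr 1; omega
        _ = x (m + 1 + k) := this
    have h : ∃ q, 0 < q ∧ shiftNat^[q] z = z := ⟨p, hp, hzp⟩
    show x m = phiCoin z
    unfold phiCoin
    rw [dif_pos h]
    set q := Nat.find h with hq
    obtain ⟨hq0, hqz⟩ := Nat.find_spec h
    have hdvd : q ∣ p := by
      by_contra hnd
      have hrem : p % q ≠ 0 := fun h0 => hnd (Nat.dvd_of_mod_eq_zero h0)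
      have hrlt : p % q < q := Nat.mod_lt _ hq0
      have hfix : shiftNat^[q * (p / q)] z = z := by
        rw [Function.iterate_mul]
        exact Function.iterate_fixed hqz _
      have hzr : shiftNat^[p % q] z = z := by
        have e1 : p = p % q + q * (p / q) := (Nat.mod_add_div p q).symm
        have : shiftNat^[p % q] z = shiftNat^[p] z := by
          conv_rhs => rw [e1]
          rw [Function.iterate_add_apply, hfix]
        rw [this, hzp]
      exact Nat.find_min h hrlt ⟨Nat.pos_of_ne_zero hrem, hzr⟩
    obtain ⟨c, hc⟩ := hdvd
    rcases c with _ | c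
    · exfalso; simp at hc; omega
    · have hpc : p = q * c + q := by rw [hc]; ring
      have hzq : ∀ j, z (q - 1 + j * q) = z (q - 1) := by
        intro j
        induction j with
        | zero => simp
        | succ j ih =>
            rw [Nat.succ_mul, ← Nat.add_assoc, periodic_eval hqz]
            exact ih
      have e2 : q - 1 + c * q = p - 1 := by
        have h1 : q - 1 + c * q + 1 = p := by
          have hq1 : q - 1 + 1 = q := Nat.succ_pred_eq_of_pos hq0
          calc q - 1 + c * q + 1 = (q - 1 + 1) + c * q := by ring
            _ = q + c * q := by rw [hq1]
            _ = q * c + q := by ring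
            _ = p := hpc.symm
        exact Nat.eq_sub_of_add_eq h1
      have hz1 : z (p - 1) = z (q - 1) := by rw [← e2, hzq c]
      have hx1 : x m = z (p - 1) := by
        rw [hz, shift_apply]
        have hxp : x (m + p) = x m := hM' m (by omega)
        have e5 : m + 1 + (p - 1) = m + p := by omega
        rw [e5, hxp]
      rw [hx1, hz1]
  · -- not eventually periodic
    have hout := Quotient.mk_out (s := coinSetoid) x
    obtain ⟨a, b, hab⟩ := hout
    set r := (Quotient.mk coinSetoid x).out with hr
    have hab' := pointwise_of_eq hab
    refine ⟨b + 1, fun n' hn => ?_⟩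
    obtain ⟨m', rfl⟩ : ∃ m, n' = m + 1 := ⟨n' - 1, by omega⟩
    rw [Fcoin_iter]
    set n := m' + 1 with hn'
    have hnb : b + 1 ≤ n := hn
    set z := shiftNat^[n] x with hz
    set m := n - b + a with hm
    have hm1 : 1 ≤ m := by omega
    have hzr : z = shiftNat^[m] r := by
      funext k
      rw [hz, shift_apply, shift_apply]
      calc x (n + k) = x (b + (n - b + k)) := by congr 1; omega
        _ = r (a + (n - b + k)) := (hab' _).symm
        _ = r (m + k) := by congr 1; omega
    have h1 : ¬ ∃ q, 0 < q ∧ shiftNat^[q] z = z := by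
      rintro ⟨q, hq0, hqz⟩
      refine hev ⟨q, hq0, n, ?_⟩
      have : shiftNat^[q + n] x = shiftNat^[n] x := by
        rw [← shift_comm, ← hz, hqz, hz]
      rwa [Nat.add_comm] at this
    have hzx : (Quotient.mk coinSetoid z) = (Quotient.mk coinSetoid x) :=
      Quotient.sound ⟨0, n, by simpa using hz⟩
    have hout2 : (Quotient.mk coinSetoid z).out = r := by rw [hzx]
    have hwit : shiftNat^[m - 1 + 1] ((Quotient.mk coinSetoid z).out) = z := by
      rw [hout2]
      have e : m - 1 + 1 = m := by omega
      rw [e, hzr]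
    have h2 : ∃ k, shiftNat^[k + 1] ((Quotient.mk coinSetoid z).out) = z := ⟨m - 1, hwit⟩
    show x m' = phiCoin z
    unfold phiCoin
    rw [dif_neg h1, dif_pos h2]
    have hkspec : shiftNat^[Nat.find h2 + 1] r = z := by
      rw [← hout2]; exact Nat.find_spec h2
    have hkle : Nat.find h2 ≤ m - 1 := Nat.find_min' h2 hwit
    have hkey : Nat.find h2 = m - 1 := by
      by_contra hne
      have hklt : Nat.find h2 + 1 < m := by omega
      have hevr : EvPer r := by
        refine ⟨m - (Nat.find h2 + 1), by omega, Nat.find h2 + 1, ?_⟩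
        have e1 : Nat.find h2 + 1 + (m - (Nat.find h2 + 1)) = m := by omega
        rw [e1, ← hzr]; exact hkspec.symm
      exact hev (evper_of_rel hab hevr)
    calc x m' = x (b + (n - b - 1)) := by congr 1; omega
      _ = r (a + (n - b - 1)) := (hab' _).symm
      _ = r (m - 1) := by congr 1; omega
      _ = (Quotient.mk coinSetoid z).out (m - 1) := by rw [hout2]
      _ = (Quotient.mk coinSetoid z).out (Nat.find h2) := by rw [hkey]
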